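/- With A = Z[X]/(X²), ι₀: A → A⊗A, a ↦ 1⊗a, and j₀ = Δ - ι₀ ∘ m ∘ Δ: A → A⊗A, the maps ι₀ and j₀ are injective and A ⊗ A = ι₀(A) ⊕ j₀(A) as abelian groups. -/

import Mathlib

open TensorProduct

noncomputable section

/-- `A = ℤ[X]/(X²)`, realized as dual numbers over `ℤ`. -/
abbrev A : Type := DualNumber ℤ

/-- The generator `X` (with `X² = 0`). -/
def X : A := DualNumber.eps

/-- The comultiplication `Δ : A → A ⊗ A`, `Δ(1) = 1⊗X + X⊗1`, `Δ(X) = X⊗X`,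
extended `ℤ`-linearly. -/
def Δ : A →ₗ[ℤ] A ⊗[ℤ] A where
  toFun x := x.fst • ((1 : A) ⊗ₜ[ℤ] X + X ⊗ₜ[ℤ] (1 : A)) + x.snd • (X ⊗ₜ[ℤ] X)
  map_add' a b := by
    simp only [TrivSqZeroExt.fst_add, TrivSqZeroExt.snd_add, add_smul]
    abel
  map_smul' c a := by
    simp only [TrivSqZeroExt.fst_smul, TrivSqZeroExt.snd_smul, RingHom.id_apply, smul_add,
      smul_smul, smul_eq_mul]


/-- The multiplication `m : A ⊗ A → A`. -/
def m : A ⊗[ℤ] A →ₗ[ℤ] A := LinearMap.mul' ℤ A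

/-- `ι₀ : A → A ⊗ A`, `a ↦ 1 ⊗ a`. -/
def ι₀ : A →ₗ[ℤ] A ⊗[ℤ] A := TensorProduct.mk ℤ A A 1

/-- `j₀ = Δ - ι₀ ∘ m ∘ Δ : A → A ⊗ A`. -/
def j₀ : A →ₗ[ℤ] A ⊗[ℤ] A := Δ - ι₀ ∘ₗ m ∘ₗ Δ

lemma XX : X * X = 0 := DualNumber.eps_mul_eps
lemma one_fst : (1:A).fst = 1 := rfl
lemma one_snd : (1:A).snd = 0 := rfl
lemma X_fst : X.fst = 0 := rfl
lemma X_snd : X.snd = 1 := rfl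
lemma decomp (x : A) : x = x.fst • (1:A) + x.snd • X := by ext <;> simp [X]

def φ : A ⊗[ℤ] A →ₗ[ℤ] A × A :=
  TensorProduct.lift <|
  LinearMap.mk₂ ℤ (fun x y => (x * y, x.snd • y))
    (fun x x' y => by ext <;> simp [add_mul, add_smul])
    (fun c x y => by ext <;> simp [mul_smul] <;> ring)
    (fun x y y' => by ext <;> simp [mul_add, smul_add])
    (fun c x y => by ext <;> simp [mul_smul] <;> ring)

def ψ : A × A →ₗ[ℤ] A ⊗[ℤ] A := ι₀.coprod j₀

lemma φ_tmul (x y : A) : φ (x ⊗ₜ[ℤ] y) = (x * y, x.snd • y) := rfl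

lemma ι₀_apply (a : A) : ι₀ a = (1:A) ⊗ₜ[ℤ] a := rfl

lemma Δ_apply (a : A) :
    Δ a = a.fst • ((1 : A) ⊗ₜ[ℤ] X + X ⊗ₜ[ℤ] (1 : A)) + a.snd • (X ⊗ₜ[ℤ] X) := rfl

lemma j₀_one : j₀ (1:A) = X ⊗ₜ[ℤ] (1:A) - (1:A) ⊗ₜ[ℤ] X := by
  have hΔ : Δ (1:A) = (1 : A) ⊗ₜ[ℤ] X + X ⊗ₜ[ℤ] (1 : A) := by
    rw [Δ_apply, one_fst, one_snd]; simp
  have hm : m ((1 : A) ⊗ₜ[ℤ] X + X ⊗ₜ[ℤ] (1 : A)) = X + X := by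
    rw [LinearMap.map_add]
    simp [m]
    erw [LinearMap.mul'_apply]
    simp
  rw [j₀, LinearMap.sub_apply, LinearMap.comp_apply, LinearMap.comp_apply, hΔ, hm,
    LinearMap.map_add, ι₀_apply]
  abel

lemma j₀_X : j₀ X = X ⊗ₜ[ℤ] X := by
  have hΔ : Δ X = X ⊗ₜ[ℤ] X := by
    rw [Δ_apply, X_fst, X_snd]; simp
  have hm : m (X ⊗ₜ[ℤ] X) = 0 := by
    simp [m]
    erw [LinearMap.mul'_apply]
    exact XX
  rw [j₀, LinearMap.sub_apply, LinearMap.comp_apply, LinearMap.comp_apply, hΔ, hm,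
    LinearMap.map_zero, sub_zero]

lemma j₀_apply (a : A) :
    j₀ a = a.fst • (X ⊗ₜ[ℤ] (1:A) - (1:A) ⊗ₜ[ℤ] X) + a.snd • (X ⊗ₜ[ℤ] X) := by
  conv_lhs => rw [decomp a]
  rw [LinearMap.map_add, LinearMap.map_smul, LinearMap.map_smul, j₀_one, j₀_X]

lemma b11 : ψ (φ ((1:A) ⊗ₜ[ℤ] (1:A))) = (1:A) ⊗ₜ[ℤ] (1:A) := by
  rw [φ_tmul, one_snd, one_mul, zero_smul]
  simp only [ψ, LinearMap.coprod_apply, LinearMap.map_zero, add_zero, ι₀_apply]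
lemma b1X : ψ (φ ((1:A) ⊗ₜ[ℤ] X)) = (1:A) ⊗ₜ[ℤ] X := by
  rw [φ_tmul, one_snd, one_mul, zero_smul]
  simp only [ψ, LinearMap.coprod_apply, LinearMap.map_zero, add_zero, ι₀_apply]
lemma bX1 : ψ (φ (X ⊗ₜ[ℤ] (1:A))) = X ⊗ₜ[ℤ] (1:A) := by
  rw [φ_tmul, X_snd, mul_one, one_smul]
  simp only [ψ, LinearMap.coprod_apply, ι₀_apply, j₀_one]
  abel
lemma bXX : ψ (φ (X ⊗ₜ[ℤ] X)) = X ⊗ₜ[ℤ] X := by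
  rw [φ_tmul, X_snd, XX, one_smul]
  simp only [ψ, LinearMap.coprod_apply, ι₀_apply, j₀_X, tmul_zero, zero_add]

lemma ψφ (z : A ⊗[ℤ] A) : ψ (φ z) = z := by
  induction z using TensorProduct.induction_on with
  | zero => rw [LinearMap.map_zero, LinearMap.map_zero]
  | add u v hu hv => rw [LinearMap.map_add, LinearMap.map_add, hu, hv]
  | tmul x y =>
    conv_lhs => rw [decomp x, decomp y]
    simp only [add_tmul, tmul_add, tmul_smul, ← smul_tmul', LinearMap.map_add,
      LinearMap.map_smul, b11, b1X, bX1, bXX]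
    conv_rhs => rw [decomp x, decomp y]
    simp only [add_tmul, tmul_add, tmul_smul, ← smul_tmul']

lemma φι₀ (a : A) : φ (ι₀ a) = (a, 0) := by
  rw [ι₀_apply, φ_tmul, one_mul, one_snd, zero_smul]

lemma φj₀ (a : A) : φ (j₀ a) = (0, a) := by
  rw [j₀_apply, LinearMap.map_add, LinearMap.map_smul, LinearMap.map_smul, LinearMap.map_sub,
    φ_tmul, φ_tmul, φ_tmul]
  rw [one_mul, mul_one, XX, one_snd, X_snd, one_smul, one_smul, zero_smul]
  rw [Prod.mk_sub_mk, sub_self, sub_zero, Prod.smul_mk, Prod.smul_mk, Prod.mk_add_mk,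
    smul_zero, smul_zero, add_zero]
  conv_rhs => rw [decomp a]


/-- The maps `ι₀` and `j₀` are injective, and `A ⊗ A = ι₀(A) ⊕ j₀(A)` as abelian
groups. -/
theorem stmt17 :
    Function.Injective ι₀ ∧ Function.Injective j₀ ∧
    IsCompl (LinearMap.range ι₀) (LinearMap.range j₀) := by
  refine ⟨?_, ?_, ?_, ?_⟩
  · intro a b h
    have := congrArg φ h
    rw [φι₀, φι₀] at this
    exact ((Prod.mk.injEq _ _ _ _).mp this).1
  · intro a b h
    have := congrArg φ h
    rw [φj₀, φj₀] at this
    exact ((Prod.mk.injEq _ _ _ _).mp this).2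
  · rw [Submodule.disjoint_def]
    rintro z ⟨a, rfl⟩ ⟨b, hb⟩
    have := congrArg φ hb
    rw [φι₀, φj₀] at this
    rw [((Prod.mk.injEq _ _ _ _).mp this).1.symm, LinearMap.map_zero]
  · rw [codisjoint_iff_le_sup]
    intro z _
    have : z = ι₀ (φ z).1 + j₀ (φ z).2 := by
      conv_lhs => rw [← ψφ z]
      rfl
    rw [this]
    exact Submodule.add_mem _ (Submodule.mem_sup_left ⟨_, rfl⟩) (Submodule.mem_sup_right ⟨_, rfl⟩)
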